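/- In R_n the following polynomial identities hold for all 1 ≤ i, j ≤ n: (i) {Δ_n, x_{ij}} = 0; and (ii) for every 1 ≤ k ≤ n−1, Δ'_{n;n−k}·{Δ_{n;k}, x_{ij}} = Δ_{n;k}·{Δ'_{n;n−k}, x_{ij}}. (Equivalently, Δ_n and each ratio Δ_{n;k}/Δ'_{n;n−k} are Casimirs of the quadratic Poisson bracket, i.e., belong to the Poisson center of ℂ(M_n).) -/

import Mathlib

open MvPolynomial

/-- The quadratic Poisson bracket on the polynomial algebra of the matrix affine
Poisson space `M_{m,n}`. -/
noncomputable def pois {m n : ℕ} (f g : MvPolynomial (Fin m × Fin n) ℂ) :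
    MvPolynomial (Fin m × Fin n) ℂ :=
  ∑ i : Fin m, ∑ k : Fin m, ∑ j : Fin n, ∑ l : Fin n,
    (((k : ℤ) - (i : ℤ)).sign + ((l : ℤ) - (j : ℤ)).sign) •
      (X (i, l) * X (k, j) * pderiv (i, j) f * pderiv (k, l) g)

/-- The minor `Δ_{I,J}` (equal to `0` by convention if `|I| ≠ |J|`). -/
noncomputable def Delta {m n : ℕ} (I : Finset (Fin m)) (J : Finset (Fin n)) :
    MvPolynomial (Fin m × Fin n) ℂ :=
  if h : J.card = I.card then
    Matrix.det (Matrix.of fun a b : Fin I.card =>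
      X ((I.orderIsoOfFin rfl a).1, (J.orderIsoOfFin h b).1))
  else 0

/-- The coordinate ring `R_n = ℂ[x_{ij}]` of `M_n`. -/
abbrev Rn (n : ℕ) := MvPolynomial (Fin n × Fin n) ℂ

/-- The field of rational functions `F_n = ℂ(M_n)`. -/
abbrev Fn (n : ℕ) := FractionRing (Rn n)

/-- The interval `[a,b]` (in 1-based indexing) inside `{1,…,n}`, as a finset of `Fin n`. -/
def iv (n a b : ℕ) : Finset (Fin n) :=
  Finset.univ.filter fun i => a ≤ (i : ℕ) + 1 ∧ (i : ℕ) + 1 ≤ b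

/-- `Δ_{l;k}`: the upper-right `k×k` minor of the principal `l×l` submatrix. -/
noncomputable def Dul (n l k : ℕ) : Rn n := Delta (iv n 1 k) (iv n (l - k + 1) l)

/-- `Δ'_{l;k}`: the lower-left `k×k` minor of the principal `l×l` submatrix. -/
noncomputable def Dll (n l k : ℕ) : Rn n := Delta (iv n (l - k + 1) l) (iv n 1 k)

/-- `Δ_l`: the principal `l×l` minor. -/
noncomputable def Dpr (n l : ℕ) : Rn n := Delta (iv n 1 l) (iv n 1 l)

/-- The extension of the quadratic Poisson bracket to the field of rational functions,
determined by `{P/Q, S/T} = ({P,S}QT − {P,T}QS − {Q,S}PT + {Q,T}PS)/(Q²T²)`. -/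
noncomputable def poisF (n : ℕ) (f g : Fn n) : Fn n :=
  let φ := algebraMap (Rn n) (Fn n)
  let P := (IsLocalization.sec (nonZeroDivisors (Rn n)) f).1
  let Q := ((IsLocalization.sec (nonZeroDivisors (Rn n)) f).2 : Rn n)
  let S := (IsLocalization.sec (nonZeroDivisors (Rn n)) g).1
  let T := ((IsLocalization.sec (nonZeroDivisors (Rn n)) g).2 : Rn n)
  (φ (pois P S) * φ Q * φ T - φ (pois P T) * φ Q * φ S
    - φ (pois Q S) * φ P * φ T + φ (pois Q T) * φ P * φ S)
    / (φ Q ^ 2 * φ T ^ 2)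

open Matrix Finset

variable {σ : Type*} [DecidableEq σ]

lemma pderiv_prod (p : σ) {ι : Type*} [DecidableEq ι] (s : Finset ι)
    (f : ι → MvPolynomial σ ℂ) :
    pderiv p (∏ i ∈ s, f i) = ∑ i ∈ s, pderiv p (f i) * ∏ j ∈ s.erase i, f j := by
  induction s using Finset.induction_on with
  | empty => simp
  | @insert a s ha ih =>
    rw [Finset.prod_insert ha, pderiv_mul, ih, Finset.sum_insert ha, Finset.erase_insert ha,
      Finset.mul_sum]
    congr 1
    refine Finset.sum_congr rfl fun i hi => ?_
    have hia : i ≠ a := fun h => ha (h ▸ hi)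
    rw [Finset.erase_insert_of_ne (Ne.symm hia),
      Finset.prod_insert (fun h => ha (Finset.mem_of_mem_erase h))]
    ring

lemma det_updateRow_finsum {c : ℕ} {R : Type*} [CommRing R] (M : Matrix (Fin c) (Fin c) R)
    (t : Fin c) {ι : Type*} [DecidableEq ι] (s : Finset ι) (v : ι → Fin c → R) :
    (M.updateRow t (∑ i ∈ s, v i)).det = ∑ i ∈ s, (M.updateRow t (v i)).det := by
  induction s using Finset.induction_on with
  | empty =>
    simp only [Finset.sum_empty]
    exact det_eq_zero_of_row_eq_zero t (by simp)
  | @insert a s ha ih =>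
    rw [Finset.sum_insert ha, Finset.sum_insert ha, det_updateRow_add, ih]

lemma pderiv_det (p : σ) {c : ℕ} (M : Matrix (Fin c) (Fin c) (MvPolynomial σ ℂ)) :
    pderiv p M.det = ∑ t, (M.updateRow t (fun b => pderiv p (M t b))).det := by
  rw [det_apply, map_sum]
  have step : ∀ τ : Equiv.Perm (Fin c),
      pderiv p (Equiv.Perm.sign τ • ∏ i, M (τ i) i)
        = Equiv.Perm.sign τ •
            ∑ i₀, pderiv p (M (τ i₀) i₀) * ∏ i ∈ Finset.univ.erase i₀, M (τ i) i := by
    intro τ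
    rw [Units.smul_def, Units.smul_def, map_zsmul, pderiv_prod]
  simp_rw [step]
  simp only [det_apply]
  rw [Finset.sum_comm]
  refine Finset.sum_congr rfl fun τ _ => ?_
  rw [Finset.smul_sum]
  refine Fintype.sum_equiv τ _ _ fun i₀ => ?_
  refine Eq.symm ?_
  congr 1
  have hfun : ∀ i, (M.updateRow (τ i₀) fun b => pderiv p (M (τ i₀) b)) (τ i) i
      = Function.update (fun i => M (τ i) i) i₀ (pderiv p (M (τ i₀) i₀)) i := by
    intro i
    rw [Function.update_apply, Matrix.updateRow_apply]
    by_cases h : i = i₀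
    · subst h; simp
    · rw [if_neg h, if_neg (fun hc => h (τ.injective hc))]
  rw [Finset.prod_congr rfl (fun i _ => hfun i), Finset.prod_update_of_mem (Finset.mem_univ i₀),
    Finset.erase_eq]


lemma pois_X_right {n : ℕ} (f : Rn n) (p q : Fin n) :
    pois f (X (p, q)) = ∑ i : Fin n, ∑ j : Fin n, (((p : ℤ) - (i : ℤ)).sign + ((q : ℤ) - (j : ℤ)).sign) •
      (X (i, q) * X (p, j) * pderiv (i, j) f) := by
  unfold pois
  refine Finset.sum_congr rfl fun i _ => ?_
  rw [Finset.sum_comm]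
  have hcol : ∀ j : Fin n, ∀ k : Fin n,
      (∑ l : Fin n, (((k : ℤ) - (i : ℤ)).sign + ((l : ℤ) - (j : ℤ)).sign) •
        (X (i, l) * X (k, j) * pderiv (i, j) f * pderiv (k, l) (X (p, q) : Rn n)))
      = if k = p then (((p : ℤ) - (i : ℤ)).sign + ((q : ℤ) - (j : ℤ)).sign) •
          (X (i, q) * X (p, j) * pderiv (i, j) f) else 0 := by
    intro j k
    by_cases hk : k = p
    · subst hk
      rw [if_pos rfl]
      rw [Finset.sum_eq_single q]
      · simp [Pi.single_apply]
      · intro l _ hl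
        have h0 : pderiv (k, l) (X (k, q) : Rn n) = 0 := by
          simp [Pi.single_apply, Prod.ext_iff, Ne.symm hl]
        simp [h0]
      · simp
    · rw [if_neg hk]
      refine Finset.sum_eq_zero fun l _ => ?_
      have : pderiv (k, l) (X (p, q) : Rn n) = 0 := by
        simp [Pi.single_apply, Prod.ext_iff, hk]
      simp [this]
  refine Finset.sum_congr rfl fun j _ => ?_
  rw [Finset.sum_congr rfl fun k _ => hcol j k, Finset.sum_ite_eq' Finset.univ p]
  simp

section Minor

variable {n c : ℕ} (r s : Fin c → Fin n)

/-- The generalized minor matrix. -/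
noncomputable def Mm (r s : Fin c → Fin n) : Matrix (Fin c) (Fin c) (Rn n) :=
  Matrix.of fun a b => X (r a, s b)

lemma det_updateRow_adj (M : Matrix (Fin c) (Fin c) (Rn n)) (t : Fin c) (v : Fin c → Rn n) :
    (M.updateRow t v).det = ∑ b, adjugate M b t * v b := by
  rw [← cramer_transpose_apply, cramer_eq_adjugate_mulVec]
  simp [Matrix.mulVec, dotProduct, ← Matrix.adjugate_transpose]

lemma det_updateCol_adj (M : Matrix (Fin c) (Fin c) (Rn n)) (u : Fin c) (w : Fin c → Rn n) :
    (M.updateCol u w).det = ∑ a, adjugate M u a * w a := by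
  rw [← cramer_apply, cramer_eq_adjugate_mulVec]
  simp [Matrix.mulVec, dotProduct]

/-- The fundamental row/column symmetry of the bracket sums. -/
lemma row_col_swap (p q : Fin n) :
    ∑ t, X (r t, q) * ((Mm r s).updateRow t fun b => X (p, s b)).det
      = ∑ u, X (p, s u) * ((Mm r s).updateCol u fun a => X (r a, q)).det := by
  simp_rw [det_updateRow_adj, det_updateCol_adj, Finset.mul_sum]
  rw [Finset.sum_comm]
  exact Finset.sum_congr rfl fun u _ => Finset.sum_congr rfl fun t _ => by ring

lemma row_replace_det {p : Fin n} (t₀ : Fin c) (h : r t₀ = p) (t : Fin c) :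
    ((Mm r s).updateRow t fun b => X (p, s b)).det
      = if t = t₀ then (Mm r s).det else 0 := by
  have hrow : (fun b => (X (p, s b) : Rn n)) = (Mm r s) t₀ := by
    funext b; simp [Mm, h]
  rw [hrow]
  by_cases ht : t = t₀
  · subst ht; rw [Matrix.updateRow_eq_self, if_pos rfl]
  · rw [if_neg ht]
    exact Matrix.det_zero_of_row_eq ht
      (by rw [Matrix.updateRow_self, Matrix.updateRow_ne (Ne.symm ht)])

lemma col_replace_det {q : Fin n} (u₀ : Fin c) (h : s u₀ = q) (u : Fin c) :
    ((Mm r s).updateCol u fun a => X (r a, q)).det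
      = if u = u₀ then (Mm r s).det else 0 := by
  have hcol : (fun a => (X (r a, q) : Rn n)) = fun a => (Mm r s) a u₀ := by
    funext a; simp [Mm, h]
  rw [hcol]
  by_cases hu : u = u₀
  · subst hu; rw [Matrix.updateCol_eq_self, if_pos rfl]
  · rw [if_neg hu]
    exact Matrix.det_zero_of_column_eq hu
      (by intro a; rw [Matrix.updateCol_self, Matrix.updateCol_ne (Ne.symm hu)])

end Minor

section Main

variable {n c : ℕ} (r s : Fin c → Fin n)

lemma pois_det_X (hs : Function.Injective s) (p q : Fin n) :
    pois (Mm r s).det (X (p, q)) =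
      (∑ t, ((p : ℤ) - (r t : ℤ)).sign •
        (X (r t, q) * ((Mm r s).updateRow t fun b => X (p, s b)).det))
      + ∑ u, ((q : ℤ) - (s u : ℤ)).sign •
        (X (p, s u) * ((Mm r s).updateCol u fun a => X (r a, q)).det) := by
  rw [pois_X_right]
  have hder : ∀ i j : Fin n, pderiv ((i, j) : Fin n × Fin n) (Mm r s).det
      = ∑ t, if r t = i
          then ((Mm r s).updateRow t fun b => if s b = j then (1 : Rn n) else 0).det
          else 0 := by
    intro i j
    rw [pderiv_det]
    refine Finset.sum_congr rfl fun t _ => ?_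
    by_cases h : r t = i
    · rw [if_pos h]
      congr 1
      · funext b
        simp [Mm, Pi.single_apply, Prod.ext_iff, h]
    · rw [if_neg h]
      refine det_eq_zero_of_row_eq_zero t fun b => ?_
      rw [Matrix.updateRow_self]
      simp [Mm, Pi.single_apply, Prod.ext_iff, h]
  simp_rw [hder, Finset.mul_sum, Finset.smul_sum, mul_ite, mul_zero, smul_ite, smul_zero]
  -- now a triple sum ∑ i ∑ j ∑ t; move t to the outside
  rw [Finset.sum_congr rfl fun i (_ : i ∈ Finset.univ) => Finset.sum_comm, Finset.sum_comm]
  -- collapse the i-sum at i = r t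
  have hcollapse : ∀ t : Fin c,
      (∑ i : Fin n, ∑ j : Fin n, if r t = i
          then (((p : ℤ) - (i : ℤ)).sign + ((q : ℤ) - (j : ℤ)).sign) •
            (X (i, q) * X (p, j) *
              ((Mm r s).updateRow t fun b => if s b = j then (1 : Rn n) else 0).det)
          else 0)
      = ∑ j : Fin n, (((p : ℤ) - (r t : ℤ)).sign + ((q : ℤ) - (j : ℤ)).sign) •
            (X (r t, q) * X (p, j) *
              ((Mm r s).updateRow t fun b => if s b = j then (1 : Rn n) else 0).det) := by
    intro t
    rw [Finset.sum_eq_single (r t)]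
    · simp
    · intro i _ hi
      refine Finset.sum_eq_zero fun j _ => if_neg (Ne.symm hi)
    · simp
  rw [Finset.sum_congr rfl fun t _ => hcollapse t]
  simp_rw [add_smul, Finset.sum_add_distrib]
  congr 1
  · -- row part
    refine Finset.sum_congr rfl fun t _ => ?_
    rw [← Finset.smul_sum]
    congr 1
    have : ∀ j : Fin n, X (r t, q) * X (p, j) *
          ((Mm r s).updateRow t fun b => if s b = j then (1 : Rn n) else 0).det
        = X (r t, q) * ((Mm r s).updateRow t
            ((X (p, j) : Rn n) • (fun b => if s b = j then (1 : Rn n) else 0) : Fin c → Rn n)).det := by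
      intro j
      rw [det_updateRow_smul]
      ring
    rw [Finset.sum_congr rfl fun j _ => this j, ← Finset.mul_sum, ← det_updateRow_finsum]
    have hsum : (∑ j : Fin n, ((X (p, j) : Rn n) •
          (fun b => if s b = j then (1 : Rn n) else 0) : Fin c → Rn n))
        = fun b => (X (p, s b) : Rn n) := by
      funext b
      rw [Finset.sum_apply]
      simp only [Pi.smul_apply, smul_eq_mul, mul_ite, mul_one, mul_zero]
      rw [Finset.sum_ite_eq Finset.univ (s b) (fun j => X (p, j))]
      simp
    rw [hsum]
  · -- column part
    rw [Finset.sum_comm]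
    have hzero : ∀ j : Fin n, j ∉ Finset.univ.image s →
        (∑ t, (((q : ℤ) - (j : ℤ)).sign) • (X (r t, q) * X (p, j) *
          ((Mm r s).updateRow t fun b => if s b = j then (1 : Rn n) else 0).det)) = 0 := by
      intro j hj
      refine Finset.sum_eq_zero fun t _ => ?_
      have h0 : ((Mm r s).updateRow t fun b => if s b = j then (1 : Rn n) else 0).det = 0 := by
        refine det_eq_zero_of_row_eq_zero t fun b => ?_
        rw [Matrix.updateRow_self, if_neg]
        exact fun h => hj (Finset.mem_image.2 ⟨b, Finset.mem_univ b, h⟩)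
      simp [h0]
    rw [← Finset.sum_subset (Finset.subset_univ (Finset.univ.image s))
      (fun j _ hj => hzero j hj)]
    rw [Finset.sum_image (fun x _ y _ h => hs h)]
    refine Finset.sum_congr rfl fun u _ => ?_
    have hdelta : (fun b => if s b = s u then (1 : Rn n) else 0) = Pi.single u 1 := by
      funext b
      simp [Pi.single_apply, hs.eq_iff]
    simp_rw [hdelta, ← adjugate_apply]
    rw [← Finset.smul_sum]
    congr 1
    rw [det_updateCol_adj, Finset.mul_sum]
    exact Finset.sum_congr rfl fun t _ => by ring

end Main

section Eval

variable {n c : ℕ} (r s : Fin c → Fin n)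

lemma row_sum_zero {p : Fin n} (q : Fin n) (t₀ : Fin c) (h : r t₀ = p) :
    ∑ t, ((p : ℤ) - (r t : ℤ)).sign •
      (X (r t, q) * ((Mm r s).updateRow t fun b => X (p, s b)).det) = 0 := by
  refine Finset.sum_eq_zero fun t _ => ?_
  rcases eq_or_ne t t₀ with rfl | ht
  · rw [h]; simp
  · rw [row_replace_det r s t₀ h, if_neg ht]; simp

lemma col_sum_zero (p : Fin n) {q : Fin n} (u₀ : Fin c) (h : s u₀ = q) :
    ∑ u, ((q : ℤ) - (s u : ℤ)).sign •
      (X (p, s u) * ((Mm r s).updateCol u fun a => X (r a, q)).det) = 0 := by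
  refine Finset.sum_eq_zero fun u _ => ?_
  rcases eq_or_ne u u₀ with rfl | hu
  · rw [h]; simp
  · rw [col_replace_det r s u₀ h, if_neg hu]; simp

lemma row_sum_cramer {p : Fin n} (q : Fin n) (t₀ : Fin c) (h : r t₀ = p) :
    ∑ t, X (r t, q) * ((Mm r s).updateRow t fun b => X (p, s b)).det
      = X (p, q) * (Mm r s).det := by
  rw [Finset.sum_eq_single t₀]
  · rw [row_replace_det r s t₀ h, if_pos rfl, h]
  · intro t _ ht
    rw [row_replace_det r s t₀ h, if_neg ht, mul_zero]
  · simp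

lemma col_sum_cramer (p : Fin n) {q : Fin n} (u₀ : Fin c) (h : s u₀ = q) :
    ∑ u, X (p, s u) * ((Mm r s).updateCol u fun a => X (r a, q)).det
      = X (p, q) * (Mm r s).det := by
  rw [Finset.sum_eq_single u₀]
  · rw [col_replace_det r s u₀ h, if_pos rfl, h]
  · intro u _ hu
    rw [col_replace_det r s u₀ h, if_neg hu, mul_zero]
  · simp

lemma sum_sign_smul_of_pos {p : Fin n} (q : Fin n) (h : ∀ t, (r t : ℕ) < (p : ℕ)) :
    ∑ t, ((p : ℤ) - (r t : ℤ)).sign •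
        (X (r t, q) * ((Mm r s).updateRow t fun b => X (p, s b)).det)
      = ∑ t, X (r t, q) * ((Mm r s).updateRow t fun b => X (p, s b)).det := by
  refine Finset.sum_congr rfl fun t _ => ?_
  have hs1 : ((p : ℤ) - (r t : ℤ)).sign = 1 := by
    rw [Int.sign_eq_one_iff_pos]
    have := h t
    omega
  rw [hs1, one_smul]

lemma sum_sign_smul_of_neg {p : Fin n} (q : Fin n) (h : ∀ t, (p : ℕ) < (r t : ℕ)) :
    ∑ t, ((p : ℤ) - (r t : ℤ)).sign •
        (X (r t, q) * ((Mm r s).updateRow t fun b => X (p, s b)).det)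
      = -∑ t, X (r t, q) * ((Mm r s).updateRow t fun b => X (p, s b)).det := by
  rw [← Finset.sum_neg_distrib]
  refine Finset.sum_congr rfl fun t _ => ?_
  have hs1 : ((p : ℤ) - (r t : ℤ)).sign = -1 := by
    rw [Int.sign_eq_neg_one_iff_neg]
    have := h t
    omega
  rw [hs1, neg_one_zsmul]

lemma col_sum_sign_smul_of_pos (p : Fin n) {q : Fin n} (h : ∀ u, (s u : ℕ) < (q : ℕ)) :
    ∑ u, ((q : ℤ) - (s u : ℤ)).sign •
        (X (p, s u) * ((Mm r s).updateCol u fun a => X (r a, q)).det)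
      = ∑ u, X (p, s u) * ((Mm r s).updateCol u fun a => X (r a, q)).det := by
  refine Finset.sum_congr rfl fun u _ => ?_
  have hs1 : ((q : ℤ) - (s u : ℤ)).sign = 1 := by
    rw [Int.sign_eq_one_iff_pos]
    have := h u
    omega
  rw [hs1, one_smul]

lemma col_sum_sign_smul_of_neg (p : Fin n) {q : Fin n} (h : ∀ u, (q : ℕ) < (s u : ℕ)) :
    ∑ u, ((q : ℤ) - (s u : ℤ)).sign •
        (X (p, s u) * ((Mm r s).updateCol u fun a => X (r a, q)).det)
      = -∑ u, X (p, s u) * ((Mm r s).updateCol u fun a => X (r a, q)).det := by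
  rw [← Finset.sum_neg_distrib]
  refine Finset.sum_congr rfl fun u _ => ?_
  have hs1 : ((q : ℤ) - (s u : ℤ)).sign = -1 := by
    rw [Int.sign_eq_neg_one_iff_neg]
    have := h u
    omega
  rw [hs1, neg_one_zsmul]

end Eval

section Intervals

lemma Delta_eq {n k : ℕ} (I J : Finset (Fin n)) (hI : I.card = k) (hJ : J.card = k)
    (f g : Fin k → Fin n) (hf : ∀ t, f t ∈ I) (hg : ∀ t, g t ∈ J)
    (hfm : StrictMono f) (hgm : StrictMono g) :
    Delta I J = (Mm f g).det := by
  subst hI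
  have hJI : J.card = I.card := hJ
  rw [Delta, dif_pos hJI]
  have hf' : f = I.orderEmbOfFin rfl := Finset.orderEmbOfFin_unique rfl hf hfm
  have hg' : g = J.orderEmbOfFin hJI := Finset.orderEmbOfFin_unique hJI hg hgm
  congr 1
  funext a b
  show (X ((I.orderIsoOfFin rfl a).1, (J.orderIsoOfFin hJI b).1) : Rn n) = X (f a, g b)
  rw [Finset.coe_orderIsoOfFin_apply, Finset.coe_orderIsoOfFin_apply, hf', hg']

lemma iv_low_card {n k : ℕ} (hk : k ≤ n) : (iv n 1 k).card = k := by
  have heq : iv n 1 k = Finset.map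
      ⟨fun t : Fin k => (⟨t.1, by omega⟩ : Fin n),
        fun a b h => by
          simp only [Fin.mk.injEq] at h
          exact Fin.ext h⟩ Finset.univ := by
    ext i
    simp only [iv, Finset.mem_filter, Finset.mem_univ, true_and, Finset.mem_map,
      Function.Embedding.coeFn_mk]
    constructor
    · rintro ⟨h1, h2⟩
      exact ⟨⟨i.1, by omega⟩, Fin.ext rfl⟩
    · rintro ⟨a, rfl⟩
      have := a.2
      show 1 ≤ (a : ℕ) + 1 ∧ (a : ℕ) + 1 ≤ k
      omega
  rw [heq, Finset.card_map, Finset.card_univ, Fintype.card_fin]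

lemma iv_high_card {n k : ℕ} (hk : k ≤ n) : (iv n (n - k + 1) n).card = k := by
  have heq : iv n (n - k + 1) n = Finset.map
      ⟨fun t : Fin k => (⟨n - k + t.1, by omega⟩ : Fin n),
        fun a b h => by
          simp only [Fin.mk.injEq] at h
          exact Fin.ext (by omega)⟩
      Finset.univ := by
    ext i
    simp only [iv, Finset.mem_filter, Finset.mem_univ, true_and, Finset.mem_map,
      Function.Embedding.coeFn_mk]
    constructor
    · rintro ⟨h1, h2⟩
      exact ⟨⟨i.1 - (n - k), by omega⟩,
        Fin.ext (show n - k + (i.1 - (n - k)) = i.1 by omega)⟩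
    · rintro ⟨a, rfl⟩
      have := a.2
      show n - k + 1 ≤ n - k + (a : ℕ) + 1 ∧ n - k + (a : ℕ) + 1 ≤ n
      omega
  rw [heq, Finset.card_map, Finset.card_univ, Fintype.card_fin]

end Intervals


/-- **`Δₙ` and the ratios `Δ_{n;k}/Δ'_{n;n−k}` are Casimirs** of the quadratic Poisson
bracket: (i) `{Δₙ, x_{ij}} = 0`, and (ii) `Δ'_{n;n−k}·{Δ_{n;k}, x_{ij}} =
Δ_{n;k}·{Δ'_{n;n−k}, x_{ij}}` for all `1 ≤ k ≤ n−1` and all `i, j`. -/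
theorem casimirs_of_quadratic_bracket (n : ℕ) (hn : 0 < n) :
    (∀ i j : Fin n, pois (Dpr n n) (X (i, j)) = 0) ∧
    (∀ k : ℕ, 1 ≤ k → k ≤ n - 1 → ∀ i j : Fin n,
      Dll n n (n - k) * pois (Dul n n k) (X (i, j))
        = Dul n n k * pois (Dll n n (n - k)) (X (i, j))) := by
  constructor
  · intro p q
    have hcard : (iv n 1 n).card = n := iv_low_card le_rfl
    let rI : Fin n → Fin n := fun t => t
    have hD : Dpr n n = (Mm rI rI).det := by
      exact Delta_eq _ _ hcard hcard rI rI
        (fun t => by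
          simp only [iv, Finset.mem_filter, Finset.mem_univ, true_and]
          exact ⟨by omega, t.2⟩)
        (fun t => by
          simp only [iv, Finset.mem_filter, Finset.mem_univ, true_and]
          exact ⟨by omega, t.2⟩)
        (fun a b h => h) (fun a b h => h)
    rw [hD, pois_det_X rI rI (fun a b h => h) p q,
      row_sum_zero rI rI q p rfl, col_sum_zero rI rI p q rfl, add_zero]
  · intro k hk1 hk2 p q
    have hkn : k < n := by omega
    let rA : Fin k → Fin n := fun t => ⟨t.1, by have := t.2; omega⟩
    let sA : Fin k → Fin n := fun u => ⟨n - k + u.1, by have := u.2; omega⟩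
    let rB : Fin (n - k) → Fin n := fun t => ⟨k + t.1, by have := t.2; omega⟩
    let sB : Fin (n - k) → Fin n := fun u => ⟨u.1, by have := u.2; omega⟩
    have hsA : Function.Injective sA := fun a b h => by
      simp only [sA, Fin.mk.injEq] at h
      exact Fin.ext (by omega)
    have hsB : Function.Injective sB := fun a b h => by
      simp only [sB, Fin.mk.injEq] at h
      exact Fin.ext h
    have hA : Dul n n k = (Mm rA sA).det := by
      exact Delta_eq _ _ (iv_low_card (by omega)) (iv_high_card (by omega)) rA sA
        (fun t => by
          simp only [iv, Finset.mem_filter, Finset.mem_univ, true_and, rA]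
          have := t.2
          exact ⟨by omega, by omega⟩)
        (fun u => by
          simp only [iv, Finset.mem_filter, Finset.mem_univ, true_and, sA]
          have := u.2
          exact ⟨by omega, by omega⟩)
        (fun a b h => by
          have h2 : (a : ℕ) < (b : ℕ) := h
          exact (show (a : ℕ) < (b : ℕ) from h2))
        (fun a b h => by
          have h2 : (a : ℕ) < (b : ℕ) := h
          exact (show n - k + (a : ℕ) < n - k + (b : ℕ) by omega))
    have hB : Dll n n (n - k) = (Mm rB sB).det := by
      exact Delta_eq _ _ (iv_high_card (by omega)) (iv_low_card (by omega)) rB sB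
        (fun t => by
          simp only [iv, Finset.mem_filter, Finset.mem_univ, true_and, rB]
          have := t.2
          exact ⟨by omega, by omega⟩)
        (fun u => by
          simp only [iv, Finset.mem_filter, Finset.mem_univ, true_and, sB]
          have := u.2
          exact ⟨by omega, by omega⟩)
        (fun a b h => by
          have h2 : (a : ℕ) < (b : ℕ) := h
          exact (show k + (a : ℕ) < k + (b : ℕ) by omega))
        (fun a b h => by
          have h2 : (a : ℕ) < (b : ℕ) := h
          exact h2)
    rw [hA, hB, pois_det_X rA sA hsA p q, pois_det_X rB sB hsB p q]
    by_cases hp : (p : ℕ) < k <;> by_cases hq : (q : ℕ) < n - k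
    · -- p < k, q < n - k
      have tA : rA ⟨p.1, hp⟩ = p := Fin.ext rfl
      have uB : sB ⟨q.1, hq⟩ = q := Fin.ext rfl
      rw [row_sum_zero rA sA q _ tA, zero_add,
        col_sum_sign_smul_of_neg rA sA p (fun u => by
          show (q : ℕ) < n - k + u.1
          omega),
        ← row_col_swap rA sA p q, row_sum_cramer rA sA q _ tA,
        col_sum_zero rB sB p _ uB, add_zero,
        sum_sign_smul_of_neg rB sB q (fun t => by
          show (p : ℕ) < k + t.1
          omega),
        row_col_swap rB sB p q, col_sum_cramer rB sB p _ uB]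
      ring
    · -- p < k, q ≥ n - k
      have tA : rA ⟨p.1, hp⟩ = p := Fin.ext rfl
      have uA : sA ⟨q.1 - (n - k), by omega⟩ = q :=
        Fin.ext (show n - k + (q.1 - (n - k)) = q.1 by omega)
      rw [row_sum_zero rA sA q _ tA, zero_add, col_sum_zero rA sA p _ uA,
        sum_sign_smul_of_neg rB sB q (fun t => by
          show (p : ℕ) < k + t.1
          omega),
        col_sum_sign_smul_of_pos rB sB p (fun u => by
          show (u.1 : ℕ) < (q : ℕ)
          have := u.2
          omega),
        row_col_swap rB sB p q, neg_add_cancel]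
      ring
    · -- p ≥ k, q < n - k
      have tB : rB ⟨p.1 - k, by omega⟩ = p := Fin.ext (show k + (p.1 - k) = p.1 by omega)
      have uB : sB ⟨q.1, hq⟩ = q := Fin.ext rfl
      rw [sum_sign_smul_of_pos rA sA q (fun t => by
          show (t.1 : ℕ) < (p : ℕ)
          have := t.2
          omega),
        col_sum_sign_smul_of_neg rA sA p (fun u => by
          show (q : ℕ) < n - k + u.1
          omega),
        row_col_swap rA sA p q, add_neg_cancel,
        row_sum_zero rB sB q _ tB, zero_add, col_sum_zero rB sB p _ uB]
      ring
    · -- p ≥ k, q ≥ n - k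
      have uA : sA ⟨q.1 - (n - k), by omega⟩ = q :=
        Fin.ext (show n - k + (q.1 - (n - k)) = q.1 by omega)
      have tB : rB ⟨p.1 - k, by omega⟩ = p := Fin.ext (show k + (p.1 - k) = p.1 by omega)
      rw [sum_sign_smul_of_pos rA sA q (fun t => by
          show (t.1 : ℕ) < (p : ℕ)
          have := t.2
          omega),
        col_sum_zero rA sA p _ uA, add_zero,
        row_col_swap rA sA p q, col_sum_cramer rA sA p _ uA,
        row_sum_zero rB sB q _ tB, zero_add,
        col_sum_sign_smul_of_pos rB sB p (fun u => by
          show (u.1 : ℕ) < (q : ℕ)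
          have := u.2
          omega),
        ← row_col_swap rB sB p q, row_sum_cramer rB sB q _ tB]
      ring
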